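/- With the notation above (σ, ᾱ > 0, λ01, λ10 ≥ 0 with λ01+λ10 > 0, ρ0 = (3ᾱ²(λ10+λ01)/(4σ²))^{1/3}, ā = σ²ρ0²/2, and w̄ the C² pasted function), the pair (ā, w̄) solves the first corrector equation: for all ρ ∈ ℝ, max{ -σ²ρ²/2 - (ᾱ²/2) w̄''(ρ) + ā, -λ10 + w̄'(ρ), -λ01 - w̄'(ρ) } = 0, and w̄(0) = 0. -/

import Mathlib

open Set Filter

/-- The pasted function. -/
noncomputable def Wfun (ρ0 k4 k2 k1 l01 l10 : ℝ) : ℝ → ℝ := fun ρ =>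
  if ρ < -ρ0 then (k4 * (-ρ0) ^ 4 + k2 * (-ρ0) ^ 2 + k1 * (-ρ0)) - l01 * (ρ - (-ρ0))
  else if ρ ≤ ρ0 then k4 * ρ ^ 4 + k2 * ρ ^ 2 + k1 * ρ
  else (k4 * ρ0 ^ 4 + k2 * ρ0 ^ 2 + k1 * ρ0) + l10 * (ρ - ρ0)

/-- Its derivative. -/
noncomputable def W1fun (ρ0 k4 k2 k1 l01 l10 : ℝ) : ℝ → ℝ := fun ρ =>
  if ρ < -ρ0 then -l01
  else if ρ ≤ ρ0 then 4 * k4 * ρ ^ 3 + 2 * k2 * ρ + k1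
  else l10

/-- Its second derivative. -/
noncomputable def W2fun (ρ0 k4 k2 : ℝ) : ℝ → ℝ := fun ρ =>
  if ρ < -ρ0 then 0
  else if ρ ≤ ρ0 then 12 * k4 * ρ ^ 2 + 2 * k2
  else 0

lemma haffR (c m a x : ℝ) : HasDerivAt (fun ρ : ℝ => c + m * (ρ - a)) m x := by
  simpa using (((hasDerivAt_id x).sub_const a).const_mul m).const_add c

lemma haffL (c m a x : ℝ) : HasDerivAt (fun ρ : ℝ => c - m * (ρ - a)) (-m) x := by
  simpa using (((hasDerivAt_id x).sub_const a).const_mul m).const_sub c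

lemma hqd (k4 k2 k1 x : ℝ) :
    HasDerivAt (fun ρ : ℝ => k4 * ρ ^ 4 + k2 * ρ ^ 2 + k1 * ρ)
      (4 * k4 * x ^ 3 + 2 * k2 * x + k1) x := by
  have h := (((hasDerivAt_pow 4 x).const_mul k4).add
      ((hasDerivAt_pow 2 x).const_mul k2)).add ((hasDerivAt_id x).const_mul k1)
  refine h.congr_deriv ?_
  norm_num
  ring

lemma hpd (k4 k2 k1 x : ℝ) :
    HasDerivAt (fun ρ : ℝ => 4 * k4 * ρ ^ 3 + 2 * k2 * ρ + k1)
      (12 * k4 * x ^ 2 + 2 * k2) x := by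
  have h := (((hasDerivAt_pow 3 x).const_mul (4 * k4)).add
      ((hasDerivAt_id x).const_mul (2 * k2))).add_const k1
  refine h.congr_deriv ?_
  norm_num
  ring

lemma hasDeriv_W (ρ0 k4 k2 k1 l01 l10 : ℝ) (hρ0 : 0 < ρ0)
    (hs1 : 4 * k4 * ρ0 ^ 3 + 2 * k2 * ρ0 + k1 = l10)
    (hs2 : 4 * k4 * (-ρ0) ^ 3 + 2 * k2 * (-ρ0) + k1 = -l01) (x : ℝ) :
    HasDerivAt (Wfun ρ0 k4 k2 k1 l01 l10) (W1fun ρ0 k4 k2 k1 l01 l10 x) x := by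
  have hlt : -ρ0 < ρ0 := by linarith
  rcases lt_trichotomy x (-ρ0) with h | h | h
  · have he : Wfun ρ0 k4 k2 k1 l01 l10 =ᶠ[nhds x]
        (fun ρ : ℝ => (k4 * (-ρ0) ^ 4 + k2 * (-ρ0) ^ 2 + k1 * (-ρ0)) - l01 * (ρ - (-ρ0))) := by
      filter_upwards [Iio_mem_nhds h] with y hy
      simp only [Wfun, if_pos (mem_Iio.mp hy)]
    have := (haffL (k4 * (-ρ0) ^ 4 + k2 * (-ρ0) ^ 2 + k1 * (-ρ0)) l01 (-ρ0) x).congr_of_eventuallyEq he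
    simpa [W1fun, if_pos h] using this
  · subst h
    have hL : HasDerivWithinAt (Wfun ρ0 k4 k2 k1 l01 l10) (-l01) (Iic (-ρ0)) (-ρ0) := by
      refine ((haffL (k4 * (-ρ0) ^ 4 + k2 * (-ρ0) ^ 2 + k1 * (-ρ0)) l01 (-ρ0)
        (-ρ0)).hasDerivWithinAt).congr ?_ ?_
      · intro y hy
        rcases lt_or_eq_of_le (mem_Iic.mp hy) with hy' | hy'
        · simp only [Wfun, if_pos hy']
        · subst hy'
          simp only [Wfun, if_neg (lt_irrefl (-ρ0)), if_pos hlt.le, ite_self]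
          ring
      · simp only [Wfun, if_neg (lt_irrefl _), if_pos hlt.le]
        ring
    have hR : HasDerivWithinAt (Wfun ρ0 k4 k2 k1 l01 l10) (-l01) (Ici (-ρ0)) (-ρ0) := by
      have h0 : HasDerivWithinAt (fun ρ : ℝ => k4 * ρ ^ 4 + k2 * ρ ^ 2 + k1 * ρ)
          (4 * k4 * (-ρ0) ^ 3 + 2 * k2 * (-ρ0) + k1) (Ici (-ρ0)) (-ρ0) :=
        (hqd k4 k2 k1 (-ρ0)).hasDerivWithinAt
      rw [hs2] at h0
      refine h0.congr_of_eventuallyEq ?_ ?_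
      · filter_upwards [self_mem_nhdsWithin,
          mem_nhdsWithin_of_mem_nhds (Iio_mem_nhds hlt)] with y hy1 hy2
        simp only [Wfun, if_neg (not_lt.mpr (mem_Ici.mp hy1)), if_pos (le_of_lt (mem_Iio.mp hy2))]
      · simp only [Wfun, if_neg (lt_irrefl _), if_pos hlt.le]
    have := hL.union hR
    rw [Iic_union_Ici, hasDerivWithinAt_univ] at this
    have hval : W1fun ρ0 k4 k2 k1 l01 l10 (-ρ0) = -l01 := by
      simp only [W1fun, if_neg (lt_irrefl _), if_pos hlt.le]
      exact hs2
    rw [hval]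
    exact this
  · rcases lt_trichotomy x ρ0 with h2 | h2 | h2
    · have he : Wfun ρ0 k4 k2 k1 l01 l10 =ᶠ[nhds x]
          (fun ρ : ℝ => k4 * ρ ^ 4 + k2 * ρ ^ 2 + k1 * ρ) := by
        filter_upwards [Ioo_mem_nhds h h2] with y hy
        simp only [Wfun, if_neg (not_lt.mpr (mem_Ioo.mp hy).1.le), if_pos (mem_Ioo.mp hy).2.le]
      have := (hqd k4 k2 k1 x).congr_of_eventuallyEq he
      simpa [W1fun, if_neg (not_lt.mpr h.le), if_pos h2.le] using this
    · rw [h2]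
      have hL : HasDerivWithinAt (Wfun ρ0 k4 k2 k1 l01 l10) l10 (Iic ρ0) ρ0 := by
        have h0 : HasDerivWithinAt (fun ρ : ℝ => k4 * ρ ^ 4 + k2 * ρ ^ 2 + k1 * ρ)
            (4 * k4 * ρ0 ^ 3 + 2 * k2 * ρ0 + k1) (Iic ρ0) ρ0 :=
          (hqd k4 k2 k1 ρ0).hasDerivWithinAt
        rw [hs1] at h0
        refine h0.congr_of_eventuallyEq ?_ ?_
        · filter_upwards [self_mem_nhdsWithin,
            mem_nhdsWithin_of_mem_nhds (Ioi_mem_nhds hlt)] with y hy1 hy2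
          simp only [Wfun, if_neg (not_lt.mpr (le_of_lt (mem_Ioi.mp hy2))), if_pos (mem_Iic.mp hy1)]
        · simp only [Wfun, if_neg (not_lt.mpr hlt.le), if_pos le_rfl]
      have hR : HasDerivWithinAt (Wfun ρ0 k4 k2 k1 l01 l10) l10 (Ici ρ0) ρ0 := by
        refine ((haffR (k4 * ρ0 ^ 4 + k2 * ρ0 ^ 2 + k1 * ρ0) l10 ρ0
          ρ0).hasDerivWithinAt).congr ?_ ?_
        · intro y hy
          rcases lt_or_eq_of_le (mem_Ici.mp hy) with hy' | hy'
          · simp only [Wfun, if_neg (not_lt.mpr (by have := mem_Ici.mp hy; linarith : -ρ0 ≤ y)),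
              if_neg (not_le.mpr hy')]
          · subst hy'
            simp only [Wfun, if_neg (not_lt.mpr hlt.le), if_pos le_rfl]
            ring
        · simp only [Wfun, if_neg (not_lt.mpr hlt.le), if_pos le_rfl]
          ring
      have := hL.union hR
      rw [Iic_union_Ici, hasDerivWithinAt_univ] at this
      have hval : W1fun ρ0 k4 k2 k1 l01 l10 ρ0 = l10 := by
        simp only [W1fun, if_neg (not_lt.mpr hlt.le), if_pos le_rfl]
        exact hs1
      rw [hval]
      exact this
    · have he : Wfun ρ0 k4 k2 k1 l01 l10 =ᶠ[nhds x]
          (fun ρ : ℝ => (k4 * ρ0 ^ 4 + k2 * ρ0 ^ 2 + k1 * ρ0) + l10 * (ρ - ρ0)) := by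
        filter_upwards [Ioi_mem_nhds h2] with y hy
        simp only [Wfun, if_neg (not_lt.mpr (by have := mem_Ioi.mp hy; linarith : -ρ0 ≤ y)),
          if_neg (not_le.mpr (mem_Ioi.mp hy))]
      have := (haffR (k4 * ρ0 ^ 4 + k2 * ρ0 ^ 2 + k1 * ρ0) l10 ρ0 x).congr_of_eventuallyEq he
      simpa [W1fun, if_neg (not_lt.mpr (by linarith : -ρ0 ≤ x)), if_neg (not_le.mpr h2)] using this

lemma hasDeriv_W1 (ρ0 k4 k2 k1 l01 l10 : ℝ) (hρ0 : 0 < ρ0)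
    (hs1 : 4 * k4 * ρ0 ^ 3 + 2 * k2 * ρ0 + k1 = l10)
    (hs2 : 4 * k4 * (-ρ0) ^ 3 + 2 * k2 * (-ρ0) + k1 = -l01)
    (hs3 : 12 * k4 * ρ0 ^ 2 + 2 * k2 = 0) (x : ℝ) :
    HasDerivAt (W1fun ρ0 k4 k2 k1 l01 l10) (W2fun ρ0 k4 k2 x) x := by
  have hlt : -ρ0 < ρ0 := by linarith
  have hs3' : 12 * k4 * (-ρ0) ^ 2 + 2 * k2 = 0 := by
    rw [show (-ρ0) ^ 2 = ρ0 ^ 2 by ring]; exact hs3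
  rcases lt_trichotomy x (-ρ0) with h | h | h
  · have he : W1fun ρ0 k4 k2 k1 l01 l10 =ᶠ[nhds x] (fun _ : ℝ => -l01) := by
      filter_upwards [Iio_mem_nhds h] with y hy
      simp only [W1fun, if_pos (mem_Iio.mp hy)]
    have := (hasDerivAt_const x (-l01)).congr_of_eventuallyEq he
    simpa [W2fun, if_pos h] using this
  · subst h
    have hL : HasDerivWithinAt (W1fun ρ0 k4 k2 k1 l01 l10) 0 (Iic (-ρ0)) (-ρ0) := by
      refine ((hasDerivAt_const (-ρ0) (-l01)).hasDerivWithinAt).congr ?_ ?_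
      · intro y hy
        rcases lt_or_eq_of_le (mem_Iic.mp hy) with hy' | hy'
        · simp only [W1fun, if_pos hy']
        · subst hy'
          simp only [W1fun, if_neg (lt_irrefl _), if_pos hlt.le]
          exact hs2
      · simp only [W1fun, if_neg (lt_irrefl _), if_pos hlt.le]
        exact hs2
    have hR : HasDerivWithinAt (W1fun ρ0 k4 k2 k1 l01 l10) 0 (Ici (-ρ0)) (-ρ0) := by
      have h0 : HasDerivWithinAt (fun ρ : ℝ => 4 * k4 * ρ ^ 3 + 2 * k2 * ρ + k1)
          (12 * k4 * (-ρ0) ^ 2 + 2 * k2) (Ici (-ρ0)) (-ρ0) :=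
        (hpd k4 k2 k1 (-ρ0)).hasDerivWithinAt
      rw [hs3'] at h0
      refine h0.congr_of_eventuallyEq ?_ ?_
      · filter_upwards [self_mem_nhdsWithin,
          mem_nhdsWithin_of_mem_nhds (Iio_mem_nhds hlt)] with y hy1 hy2
        simp only [W1fun, if_neg (not_lt.mpr (mem_Ici.mp hy1)), if_pos (le_of_lt (mem_Iio.mp hy2))]
      · simp only [W1fun, if_neg (lt_irrefl _), if_pos hlt.le]
    have := hL.union hR
    rw [Iic_union_Ici, hasDerivWithinAt_univ] at this
    have hval : W2fun ρ0 k4 k2 (-ρ0) = 0 := by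
      simp only [W2fun, if_neg (lt_irrefl _), if_pos hlt.le]
      exact hs3'
    rw [hval]
    exact this
  · rcases lt_trichotomy x ρ0 with h2 | h2 | h2
    · have he : W1fun ρ0 k4 k2 k1 l01 l10 =ᶠ[nhds x]
          (fun ρ : ℝ => 4 * k4 * ρ ^ 3 + 2 * k2 * ρ + k1) := by
        filter_upwards [Ioo_mem_nhds h h2] with y hy
        simp only [W1fun, if_neg (not_lt.mpr (mem_Ioo.mp hy).1.le), if_pos (mem_Ioo.mp hy).2.le]
      have := (hpd k4 k2 k1 x).congr_of_eventuallyEq he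
      simpa [W2fun, if_neg (not_lt.mpr h.le), if_pos h2.le] using this
    · rw [h2]
      have hL : HasDerivWithinAt (W1fun ρ0 k4 k2 k1 l01 l10) 0 (Iic ρ0) ρ0 := by
        have h0 : HasDerivWithinAt (fun ρ : ℝ => 4 * k4 * ρ ^ 3 + 2 * k2 * ρ + k1)
            (12 * k4 * ρ0 ^ 2 + 2 * k2) (Iic ρ0) ρ0 :=
          (hpd k4 k2 k1 ρ0).hasDerivWithinAt
        rw [hs3] at h0
        refine h0.congr_of_eventuallyEq ?_ ?_
        · filter_upwards [self_mem_nhdsWithin,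
            mem_nhdsWithin_of_mem_nhds (Ioi_mem_nhds hlt)] with y hy1 hy2
          simp only [W1fun, if_neg (not_lt.mpr (le_of_lt (mem_Ioi.mp hy2))), if_pos (mem_Iic.mp hy1)]
        · simp only [W1fun, if_neg (not_lt.mpr hlt.le), if_pos le_rfl]
      have hR : HasDerivWithinAt (W1fun ρ0 k4 k2 k1 l01 l10) 0 (Ici ρ0) ρ0 := by
        refine ((hasDerivAt_const ρ0 l10).hasDerivWithinAt).congr ?_ ?_
        · intro y hy
          rcases lt_or_eq_of_le (mem_Ici.mp hy) with hy' | hy'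
          · simp only [W1fun, if_neg (not_lt.mpr (by have := mem_Ici.mp hy; linarith : -ρ0 ≤ y)),
              if_neg (not_le.mpr hy')]
          · subst hy'
            simp only [W1fun, if_neg (not_lt.mpr hlt.le), if_pos le_rfl]
            exact hs1
        · simp only [W1fun, if_neg (not_lt.mpr hlt.le), if_pos le_rfl]
          exact hs1
      have := hL.union hR
      rw [Iic_union_Ici, hasDerivWithinAt_univ] at this
      have hval : W2fun ρ0 k4 k2 ρ0 = 0 := by
        simp only [W2fun, if_neg (not_lt.mpr hlt.le), if_pos le_rfl]
        exact hs3
      rw [hval]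
      exact this
    · have he : W1fun ρ0 k4 k2 k1 l01 l10 =ᶠ[nhds x] (fun _ : ℝ => l10) := by
        filter_upwards [Ioi_mem_nhds h2] with y hy
        simp only [W1fun, if_neg (not_lt.mpr (by have := mem_Ioi.mp hy; linarith : -ρ0 ≤ y)),
          if_neg (not_le.mpr (mem_Ioi.mp hy))]
      have := (hasDerivAt_const x l10).congr_of_eventuallyEq he
      simpa [W2fun, if_neg (not_lt.mpr (by linarith : -ρ0 ≤ x)), if_neg (not_le.mpr h2)] using this

lemma max3_left {a b c : ℝ} (ha : a = 0) (hb : b ≤ 0) (hc : c ≤ 0) :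
    max (max a b) c = 0 := by
  subst ha; rw [max_eq_left hb, max_eq_left hc]

lemma max3_mid {a b c : ℝ} (hb : b = 0) (ha : a ≤ 0) (hc : c ≤ 0) :
    max (max a b) c = 0 := by
  subst hb; rw [max_eq_right ha, max_eq_left hc]

lemma max3_right {a b c : ℝ} (hc : c = 0) (ha : a ≤ 0) (hb : b ≤ 0) :
    max (max a b) c = 0 := by
  subst hc; rw [max_eq_right (max_le ha hb)]

set_option maxHeartbeats 2000000 in
/-- The pair (ā, w̄) solves the first corrector equation pointwise, with w̄(0) = 0. -/
theorem stmt_1 (σ α l01 l10 : ℝ) (hσ : 0 < σ) (hα : 0 < α)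
    (h01 : 0 ≤ l01) (h10 : 0 ≤ l10) (hsum : 0 < l01 + l10) :
    let ρ0 : ℝ := (3 * α ^ 2 * (l10 + l01) / (4 * σ ^ 2)) ^ ((1 : ℝ) / 3)
    let abar : ℝ := σ ^ 2 * ρ0 ^ 2 / 2
    let k4 : ℝ := -σ ^ 2 / (12 * α ^ 2)
    let k2 : ℝ := abar / α ^ 2
    let k1 : ℝ := (l10 - l01) / 2
    let q : ℝ → ℝ := fun ρ => k4 * ρ ^ 4 + k2 * ρ ^ 2 + k1 * ρ
    let w : ℝ → ℝ := fun ρ =>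
      if ρ < -ρ0 then q (-ρ0) - l01 * (ρ - (-ρ0))
      else if ρ ≤ ρ0 then q ρ
      else q ρ0 + l10 * (ρ - ρ0)
    (∀ ρ : ℝ,
      max (max (-(σ ^ 2 * ρ ^ 2) / 2 - α ^ 2 / 2 * deriv (deriv w) ρ + abar)
               (-l10 + deriv w ρ))
          (-l01 - deriv w ρ) = 0) ∧ w 0 = 0 := by
  intro ρ0 abar k4 k2 k1 q w
  have hσ' : σ ≠ 0 := ne_of_gt hσ
  have hα' : α ≠ 0 := ne_of_gt hα
  have hX : (0 : ℝ) < 3 * α ^ 2 * (l10 + l01) / (4 * σ ^ 2) := by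
    apply div_pos
    · have : (0 : ℝ) < l10 + l01 := by linarith
      positivity
    · positivity
  have hρ0 : 0 < ρ0 := Real.rpow_pos_of_pos hX _
  have hcube : ρ0 ^ 3 = 3 * α ^ 2 * (l10 + l01) / (4 * σ ^ 2) := by
    show ((3 * α ^ 2 * (l10 + l01) / (4 * σ ^ 2) : ℝ) ^ ((1 : ℝ) / 3)) ^ (3 : ℕ) = _
    rw [← Real.rpow_natCast (_ ^ ((1 : ℝ) / 3)) 3, ← Real.rpow_mul hX.le]
    norm_num
  have hc : σ ^ 2 * ρ0 ^ 3 = 3 * α ^ 2 * (l10 + l01) / 4 := by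
    rw [hcube]; field_simp
  have habar : abar = σ ^ 2 * ρ0 ^ 2 / 2 := rfl
  have hk4 : k4 = -σ ^ 2 / (12 * α ^ 2) := rfl
  have hk2 : k2 = σ ^ 2 * ρ0 ^ 2 / 2 / α ^ 2 := rfl
  have hk1 : k1 = (l10 - l01) / 2 := rfl
  have hs1 : 4 * k4 * ρ0 ^ 3 + 2 * k2 * ρ0 + k1 = l10 := by
    rw [hk4, hk2, hk1]
    field_simp
    nlinarith [hc]
  have hs2 : 4 * k4 * (-ρ0) ^ 3 + 2 * k2 * (-ρ0) + k1 = -l01 := by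
    rw [hk4, hk2, hk1]
    field_simp
    nlinarith [hc]
  have hs3 : 12 * k4 * ρ0 ^ 2 + 2 * k2 = 0 := by
    rw [hk4, hk2]
    field_simp
    ring
  have hw : w = Wfun ρ0 k4 k2 k1 l01 l10 := rfl
  clear_value w q k1 k2 k4 abar ρ0
  have hd1 : deriv w = W1fun ρ0 k4 k2 k1 l01 l10 := by
    rw [hw]
    exact funext fun x => (hasDeriv_W ρ0 k4 k2 k1 l01 l10 hρ0 hs1 hs2 x).deriv
  have hd2 : deriv (deriv w) = W2fun ρ0 k4 k2 := by
    rw [hd1]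
    exact funext fun x => (hasDeriv_W1 ρ0 k4 k2 k1 l01 l10 hρ0 hs1 hs2 hs3 x).deriv
  constructor
  · intro ρ
    rw [hd2, hd1]
    have hlt : -ρ0 < ρ0 := by linarith
    rcases lt_or_ge ρ (-ρ0) with h | h
    · rw [show W1fun ρ0 k4 k2 k1 l01 l10 ρ = -l01 from if_pos h,
        show W2fun ρ0 k4 k2 ρ = 0 from if_pos h]
      refine max3_right (by ring) ?_ (by linarith)
      have hρ2 : ρ0 ^ 2 ≤ ρ ^ 2 := by nlinarith
      rw [habar]
      nlinarith
    · rcases le_or_gt ρ ρ0 with h2 | h2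
      · rw [show W1fun ρ0 k4 k2 k1 l01 l10 ρ = 4 * k4 * ρ ^ 3 + 2 * k2 * ρ + k1 from by
          simp only [W1fun, if_neg (not_lt.mpr h), if_pos h2],
          show W2fun ρ0 k4 k2 ρ = 12 * k4 * ρ ^ 2 + 2 * k2 from by
          simp only [W2fun, if_neg (not_lt.mpr h), if_pos h2]]
        have key1 : l10 - (4 * k4 * ρ ^ 3 + 2 * k2 * ρ + k1)
            = σ ^ 2 / (3 * α ^ 2) * ((ρ0 - ρ) ^ 2 * (2 * ρ0 + ρ)) := by
          rw [← hs1, hk4, hk2]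
          field_simp
          ring
        have key2 : (4 * k4 * ρ ^ 3 + 2 * k2 * ρ + k1) - (-l01)
            = σ ^ 2 / (3 * α ^ 2) * ((ρ + ρ0) ^ 2 * (2 * ρ0 - ρ)) := by
          rw [← hs2, hk4, hk2]
          field_simp
          ring
        have hpos : (0 : ℝ) ≤ σ ^ 2 / (3 * α ^ 2) := by positivity
        have h1 : (0 : ℝ) ≤ σ ^ 2 / (3 * α ^ 2) * ((ρ0 - ρ) ^ 2 * (2 * ρ0 + ρ)) :=
          mul_nonneg hpos (mul_nonneg (sq_nonneg _) (by linarith))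
        have h2' : (0 : ℝ) ≤ σ ^ 2 / (3 * α ^ 2) * ((ρ + ρ0) ^ 2 * (2 * ρ0 - ρ)) :=
          mul_nonneg hpos (mul_nonneg (sq_nonneg _) (by linarith))
        refine max3_left ?_ (by linarith [key1 ▸ h1]) (by linarith [key2 ▸ h2'])
        rw [hk4, hk2, habar]
        field_simp
        ring
      · rw [show W1fun ρ0 k4 k2 k1 l01 l10 ρ = l10 from by
          simp only [W1fun, if_neg (not_lt.mpr (by linarith : -ρ0 ≤ ρ)),
            if_neg (not_le.mpr h2)],
          show W2fun ρ0 k4 k2 ρ = 0 from by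
          simp only [W2fun, if_neg (not_lt.mpr (by linarith : -ρ0 ≤ ρ)),
            if_neg (not_le.mpr h2)]]
        refine max3_mid (by ring) ?_ (by linarith)
        have hρ2 : ρ0 ^ 2 ≤ ρ ^ 2 := by nlinarith
        rw [habar]
        nlinarith
  · rw [hw]
    simp only [Wfun, if_neg (by linarith : ¬ (0:ℝ) < -ρ0), if_pos hρ0.le]
    ring
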